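/- Let b ≥ 2 and consider the Riccati Mahler equation ℓ_r·u·Mu⋯M^{r−1}u + ⋯ + ℓ_2·u·Mu + ℓ_1·u + ℓ_0 = 0, where ℓ_0, …, ℓ_r are polynomials over an algebraically closed field of characteristic zero with ℓ_0 ℓ_r ≠ 0, and where M f(x) = f(x^b). Suppose u = P/Q is a rational solution with P, Q coprime polynomials. Then M^{r−1}Q divides ℓ_r · ∏_{i=0}^{r−2} M^i P, and consequently b^{r−1}·deg Q ≤ deg ℓ_r + ((b^{r−1}−1)/(b−1))·deg P. -/

import Mathlib

open Polynomial

/-- The Mahler substitution endomorphism `p(x) ↦ p(x^b)` on polynomials. -/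
noncomputable def mahlerPoly {K : Type*} [Field K] (b : ℕ) (p : K[X]) : K[X] :=
  p.comp (X ^ b)

section aux

variable {K : Type*} [Field K] {b : ℕ}

/-- `mahlerPoly` as a ring homomorphism. -/
noncomputable def mahlerHom (K : Type*) [Field K] (b : ℕ) : K[X] →+* K[X] :=
  eval₂RingHom C (X ^ b)

lemma mahlerPoly_eq (p : K[X]) : mahlerPoly b p = mahlerHom K b p := rfl

lemma mahler_ne_zero (hb : 1 ≤ b) {p : K[X]} (hp : p ≠ 0) : mahlerPoly b p ≠ 0 := by
  rw [mahlerPoly, Ne, comp_eq_zero_iff]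
  rintro (h | ⟨-, h⟩)
  · exact hp h
  · have := congrArg natDegree h
    rw [natDegree_X_pow, natDegree_C] at this
    omega

lemma mahler_iter_ne_zero (hb : 1 ≤ b) {p : K[X]} (hp : p ≠ 0) (n : ℕ) :
    (mahlerPoly b)^[n] p ≠ 0 := by
  induction n with
  | zero => simpa
  | succ n ih => rw [Function.iterate_succ_apply']; exact mahler_ne_zero hb ih

lemma mahler_natDegree (p : K[X]) : (mahlerPoly b p).natDegree = p.natDegree * b := by
  rw [mahlerPoly, natDegree_comp, natDegree_X_pow]

lemma mahler_iter_natDegree (p : K[X]) (n : ℕ) :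
    ((mahlerPoly b)^[n] p).natDegree = p.natDegree * b ^ n := by
  induction n with
  | zero => simp
  | succ n ih =>
    rw [Function.iterate_succ_apply', mahler_natDegree, ih, pow_succ, mul_assoc]

lemma mahler_iter_isCoprime {p q : K[X]} (h : IsCoprime p q) (n : ℕ) :
    IsCoprime ((mahlerPoly b)^[n] p) ((mahlerPoly b)^[n] q) := by
  induction n with
  | zero => simpa
  | succ n ih =>
    rw [Function.iterate_succ_apply', Function.iterate_succ_apply', mahlerPoly_eq,
      mahlerPoly_eq]
    exact ih.map (mahlerHom K b)

end aux

/-- Let `b ≥ 2` and consider the Riccati Mahler equation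
`∑_{i=0}^{r} ℓ_i · ∏_{j=0}^{i−1} M^j u = 0` with `ℓ_0 ℓ_r ≠ 0` over an algebraically
closed field of characteristic zero, where `M f(x) = f(x^b)`.  If `u = P/Q` is a rational
solution with `P, Q` coprime, then `M^{r−1} Q` divides `ℓ_r · ∏_{i=0}^{r−2} M^i P`, and
consequently `b^{r−1}·deg Q ≤ deg ℓ_r + ((b^{r−1}−1)/(b−1))·deg P`. -/
theorem riccati_denominator_divisibility {K : Type*} [Field K] [IsAlgClosed K] [CharZero K]
    (b r : ℕ) (hb : 2 ≤ b) (hr : 1 ≤ r)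
    (ℓ : ℕ → K[X]) (h0 : ℓ 0 ≠ 0) (hrne : ℓ r ≠ 0)
    (P Q : K[X]) (hQ : Q ≠ 0) (hcop : IsCoprime P Q)
    (hsol : ∑ i ∈ Finset.range (r + 1),
        algebraMap K[X] (RatFunc K) (ℓ i) *
          ∏ j ∈ Finset.range i,
            (algebraMap K[X] (RatFunc K) ((mahlerPoly b)^[j] P) /
              algebraMap K[X] (RatFunc K) ((mahlerPoly b)^[j] Q)) = 0) :
    ((mahlerPoly b)^[r - 1] Q ∣ ℓ r * ∏ i ∈ Finset.range (r - 1), (mahlerPoly b)^[i] P) ∧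
      (b : ℚ) ^ (r - 1) * Q.natDegree ≤
        ((ℓ r).natDegree : ℚ) +
          (((b : ℚ) ^ (r - 1) - 1) / ((b : ℚ) - 1)) * P.natDegree := by
  obtain ⟨s, rfl⟩ : ∃ s, r = s + 1 := ⟨r - 1, (Nat.succ_pred_eq_of_pos hr).symm⟩
  have hb1 : 1 ≤ b := by omega
  set F := algebraMap K[X] (RatFunc K) with hF
  have hFinj : Function.Injective F := IsFractionRing.injective _ _
  have hQn : ∀ j, (mahlerPoly b)^[j] Q ≠ 0 := fun j => mahler_iter_ne_zero hb1 hQ j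
  have hBne : ∀ j, F ((mahlerPoly b)^[j] Q) ≠ 0 := fun j => by
    rw [map_ne_zero_iff F hFinj]; exact hQn j
  -- clear denominators
  have key : ∑ i ∈ Finset.range (s + 2),
      ℓ i * (∏ j ∈ Finset.range i, (mahlerPoly b)^[j] P) *
        ∏ j ∈ Finset.Ico i (s + 1), (mahlerPoly b)^[j] Q = 0 := by
    apply hFinj
    rw [map_sum, map_zero]
    have h := congrArg (· * ∏ j ∈ Finset.range (s + 1), F ((mahlerPoly b)^[j] Q)) hsol
    simp only [zero_mul, Finset.sum_mul] at h
    rw [← h]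
    refine Finset.sum_congr rfl fun i hi => ?_
    have hi' : i ≤ s + 1 := by
      have := Finset.mem_range.mp hi; omega
    rw [map_mul, map_mul, map_prod, map_prod,
      Finset.range_eq_Ico (a := s + 1), ← Finset.prod_Ico_consecutive _ (Nat.zero_le i) hi',
      ← Finset.range_eq_Ico]
    have hprod : ∏ j ∈ Finset.range i,
        (F ((mahlerPoly b)^[j] P) / F ((mahlerPoly b)^[j] Q)) *
          F ((mahlerPoly b)^[j] Q) = ∏ j ∈ Finset.range i, F ((mahlerPoly b)^[j] P) :=
      Finset.prod_congr rfl fun j _ => div_mul_cancel₀ _ (hBne j)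
    rw [Finset.prod_mul_distrib] at hprod
    rw [← hprod]
    ring
  -- P ≠ 0
  have hP : P ≠ 0 := by
    intro hP0
    apply h0
    rw [Finset.sum_range_succ'] at key
    have hz : ∀ i ∈ Finset.range (s + 1),
        ℓ (i + 1) * (∏ j ∈ Finset.range (i + 1), (mahlerPoly b)^[j] P) *
          ∏ j ∈ Finset.Ico (i + 1) (s + 1), (mahlerPoly b)^[j] Q = 0 := by
      intro i _
      have : ∏ j ∈ Finset.range (i + 1), (mahlerPoly b)^[j] P = 0 :=
        Finset.prod_eq_zero (Finset.mem_range.mpr (Nat.succ_pos i)) (by simp [hP0])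
      rw [this, mul_zero, zero_mul]
    rw [Finset.sum_eq_zero hz, zero_add] at key
    simp only [Finset.range_zero, Finset.prod_empty, mul_one] at key
    have hprodQ : ∏ j ∈ Finset.Ico 0 (s + 1), (mahlerPoly b)^[j] Q ≠ 0 :=
      Finset.prod_ne_zero_iff.mpr fun j _ => hQn j
    exact (mul_eq_zero.mp key).resolve_right hprodQ
  -- divisibility
  have hdvd : (mahlerPoly b)^[s] Q ∣
      ℓ (s + 1) * ∏ i ∈ Finset.range s, (mahlerPoly b)^[i] P := by
    rw [Finset.sum_range_succ] at key
    simp only [Finset.Ico_self, Finset.prod_empty, mul_one] at key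
    have h1 : ℓ (s + 1) * ∏ j ∈ Finset.range (s + 1), (mahlerPoly b)^[j] P =
        -∑ i ∈ Finset.range (s + 1),
          ℓ i * (∏ j ∈ Finset.range i, (mahlerPoly b)^[j] P) *
            ∏ j ∈ Finset.Ico i (s + 1), (mahlerPoly b)^[j] Q :=
      eq_neg_of_add_eq_zero_right key
    have h2 : (mahlerPoly b)^[s] Q ∣
        ℓ (s + 1) * ∏ j ∈ Finset.range (s + 1), (mahlerPoly b)^[j] P := by
      rw [h1, dvd_neg]
      refine Finset.dvd_sum fun i hi => ?_
      have hmem : s ∈ Finset.Ico i (s + 1) := by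
        rw [Finset.mem_Ico]
        constructor
        · have := Finset.mem_range.mp hi; omega
        · omega
      exact Dvd.dvd.mul_left (Finset.dvd_prod_of_mem _ hmem) _
    rw [Finset.prod_range_succ, ← mul_assoc] at h2
    exact ((mahler_iter_isCoprime hcop.symm s).dvd_of_dvd_mul_right h2)
  have hsimp : s + 1 - 1 = s := rfl
  refine ⟨by rw [hsimp]; exact hdvd, ?_⟩
  rw [hsimp]
  -- degree bound
  have hprodP : ∀ i ∈ Finset.range s, (mahlerPoly b)^[i] P ≠ 0 :=
    fun i _ => mahler_iter_ne_zero hb1 hP i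
  have hTne : ℓ (s + 1) * ∏ i ∈ Finset.range s, (mahlerPoly b)^[i] P ≠ 0 :=
    mul_ne_zero hrne (Finset.prod_ne_zero_iff.mpr hprodP)
  have hdeg := Polynomial.natDegree_le_of_dvd hdvd hTne
  rw [natDegree_mul hrne (Finset.prod_ne_zero_iff.mpr hprodP),
    Polynomial.natDegree_prod _ _ hprodP, mahler_iter_natDegree] at hdeg
  simp only [mahler_iter_natDegree] at hdeg
  have hbne1 : (b : ℚ) ≠ 1 := by
    intro h
    have : b = 1 := by exact_mod_cast h
    omega
  rw [← geom_sum_eq hbne1, Finset.sum_mul]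
  calc (b : ℚ) ^ s * Q.natDegree = ((Q.natDegree * b ^ s : ℕ) : ℚ) := by push_cast; ring
    _ ≤ (((ℓ (s + 1)).natDegree + ∑ i ∈ Finset.range s, P.natDegree * b ^ i : ℕ) : ℚ) := by
        exact_mod_cast hdeg
    _ = ((ℓ (s + 1)).natDegree : ℚ) + ∑ i ∈ Finset.range s, (b : ℚ) ^ i * P.natDegree := by
        push_cast
        rw [add_right_inj]
        exact Finset.sum_congr rfl fun i _ => by ring
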